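/- arXiv:2604.11319 — 8 statements merged into one kernel-verified Lean document; each statement's English description precedes it below -/
import Mathlib

section
/- Let u, v ∈ ℝ² with det(u, v − u) ≠ 0 and let A_{uv}(z) = z + (det(z, v − u)/det(u, v − u))·(v − u) be the associated shear map. If x, y ∈ ℝ² satisfy A_{uv}(x) = y and det(x, y) ≠ 0, then A_{uv} = A_{xy}; that is, A_{uv}(z) = z + (det(z, y − x)/det(x, y − x))·(y − x) for all z ∈ ℝ². -/
/-- The standard 2×2 determinant on `ℝ × ℝ`. -/
noncomputable def det2 (x y : ℝ × ℝ) : ℝ := x.1 * y.2 - x.2 * y.1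

/-- The shear map `A_{uv}(x) = x + (det(x, v−u)/det(u, v−u)) • (v−u)`. -/
noncomputable def shear (u v : ℝ × ℝ) (x : ℝ × ℝ) : ℝ × ℝ :=
  x + (det2 x (v - u) / det2 u (v - u)) • (v - u)

lemma det2_smul_right (c : ℝ) (x w : ℝ × ℝ) : det2 x (c • w) = c * det2 x w := by
  simp [det2, Prod.smul_fst, Prod.smul_snd]; ring

lemma det2_add_self (x w : ℝ × ℝ) : det2 x (x + w) = det2 x w := by
  simp [det2]; ring

/-- if `A_{uv}(x) = y` with `det(x, y) ≠ 0` then `A_{uv} = A_{xy}`. -/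
theorem stmt_3 (u v x y : ℝ × ℝ) (huv : det2 u (v - u) ≠ 0)
    (hxy : shear u v x = y) (hdet : det2 x y ≠ 0) :
    ∀ z, shear u v z = shear x y z := by
  intro z
  set w := v - u with hw
  set c : ℝ := det2 x w / det2 u w with hc
  have hyx : y - x = c • w := by rw [← hxy]; simp [shear]; rfl
  have hdxy : det2 x y = c * det2 x w := by
    have : y = x + c • w := by rw [← hyx]; abel
    rw [this, det2_add_self, det2_smul_right]
  have hc0 : c ≠ 0 := fun h => hdet (by rw [hdxy, h, zero_mul])
  have hxw : det2 x w ≠ 0 := fun h => hdet (by rw [hdxy, h, mul_zero])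
  have hcw : c * det2 x w ≠ 0 := mul_ne_zero hc0 hxw
  have key : det2 z w / det2 u w = c * det2 z w / det2 x w := by
    rw [hc]; field_simp
  rw [shear, shear, hyx, det2_smul_right, det2_smul_right, smul_smul, ← hw]
  congr 1
  rw [key]
  clear_value c
  congr 1
  field_simp
end

section
/- Under the standing assumptions on the convex quadrilateral a, b, c, d and the interior point o, one has the two inequalities Δ(c,d,a)·Δ(o,a,b) ≤ (2Δ(o,a,b) + 2Δ(o,b,c) − Δ(a,b,c))·Δ(o,d,a) and Δ(c,d,a)·Δ(o,b,c) ≤ (2Δ(o,a,b) + 2Δ(o,b,c) − Δ(a,b,c))·Δ(o,c,d). -/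
/-- The area `Δ(p,q,r) = |det(q−p, r−p)|/2` of the triangle with vertices `p, q, r`. -/
noncomputable def tri (p q r : ℝ × ℝ) : ℝ := |det2 (q - p) (r - p)| / 2

lemma det2_cyc (p q r : ℝ × ℝ) : det2 (q - p) (r - p) = det2 (r - q) (p - q) := by
  simp only [det2, Prod.fst_sub, Prod.snd_sub]; ring

/-- `a b c d` is a convex quadrilateral (counterclockwise), `o` an
interior point, the vertex `d` is non-admissible, and `o` lies in the forbidden
region. -/
theorem stmt_4 (a b c d o : ℝ × ℝ)
    (hc1 : 0 < det2 (b - a) (c - a)) (hc2 : 0 < det2 (c - b) (d - b))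
    (hc3 : 0 < det2 (d - c) (a - c)) (hc4 : 0 < det2 (a - d) (b - d))
    (ho1 : 0 < det2 (b - a) (o - a)) (ho2 : 0 < det2 (c - b) (o - b))
    (ho3 : 0 < det2 (d - c) (o - c)) (ho4 : 0 < det2 (a - d) (o - d))
    (hna1 : tri a b d ≤ tri a b c) (hna2 : tri b c d ≤ tri a b c)
    (hf1 : 2 * tri o a b ≤ tri a b c) (hf2 : 2 * tri o b c ≤ tri a b c)
    (hf3 : 2 * tri o d a ≤ tri a b d) (hf4 : 2 * tri o c d ≤ tri b c d) :
    tri c d a * tri o a b ≤ (2 * tri o a b + 2 * tri o b c - tri a b c) * tri o d a ∧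
    tri c d a * tri o b c ≤ (2 * tri o a b + 2 * tri o b c - tri a b c) * tri o c d := by
  have e1 : tri o a b = det2 (b - a) (o - a) / 2 := by
    rw [tri, det2_cyc, abs_of_pos ho1]
  have e2 : tri o b c = det2 (c - b) (o - b) / 2 := by
    rw [tri, det2_cyc, abs_of_pos ho2]
  have e3 : tri o c d = det2 (d - c) (o - c) / 2 := by
    rw [tri, det2_cyc, abs_of_pos ho3]
  have e4 : tri o d a = det2 (a - d) (o - d) / 2 := by
    rw [tri, det2_cyc, abs_of_pos ho4]
  have e5 : tri a b c = det2 (b - a) (c - a) / 2 := by rw [tri, abs_of_pos hc1]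
  have e6 : tri a b d = det2 (a - d) (b - d) / 2 := by
    rw [tri, det2_cyc, det2_cyc, abs_of_pos hc4]
  have e7 : tri b c d = det2 (c - b) (d - b) / 2 := by rw [tri, abs_of_pos hc2]
  have e8 : tri c d a = det2 (d - c) (a - c) / 2 := by rw [tri, abs_of_pos hc3]
  simp only [e1, e2, e3, e4, e5, e6, e7, e8] at hf1 hf2 hf3 hf4 ⊢
  have h1 : 0 ≤ det2 (b - a) (c - a) / 2 - det2 (b - a) (o - a) / 2
      - det2 (c - b) (o - b) / 2 := by linarith
  have h2 : 0 ≤ det2 (a - d) (b - d) / 2 - 2 * (det2 (a - d) (o - d) / 2) := by linarith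
  have h3 : 0 ≤ det2 (c - b) (d - b) / 2 - 2 * (det2 (d - c) (o - c) / 2) := by linarith
  obtain ⟨ax, ay⟩ := a
  obtain ⟨bx, by'⟩ := b
  obtain ⟨cx, cy⟩ := c
  obtain ⟨dx, dy⟩ := d
  obtain ⟨ox, oy⟩ := o
  simp only [det2, Prod.mk_sub_mk] at h1 h2 h3 ⊢
  constructor
  · linarith [mul_nonneg h1 h2]
  · linarith [mul_nonneg h1 h3]
end

section
/- Under the standing assumptions on the convex quadrilateral a, b, c, d and the interior point o, one has Δ(c,d,a)² ≤ 4·Δ(o,d,a)·Δ(o,c,d), with equality if and only if o = (a+c)/2 is the midpoint of the diagonal [a,c]; and Δ(a,b,c)² ≥ 4·Δ(o,b,c)·Δ(o,a,b), again with equality if and only if o = (a+c)/2. -/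
set_option maxHeartbeats 1000000 in
private lemma key (x y u v w T U P Q : ℝ) (hT : 0 < T) (hU : 0 < U)
    (hP : 0 < P) (hQ : 0 < Q) (hu : 0 < u) (hv : 0 < v)
    (hPQ : P + Q = U + T) (hw : x + y + w = T) (hw' : u + v - w = U)
    (huT : T * u = (Q - T) * x - P * y + T * P)
    (hvT : T * v = -(Q * x) + (P - T) * y + T * Q)
    (hQU : Q ≤ U) (hPU : P ≤ U)
    (h2u : 2 * u ≤ U) (h2v : 2 * v ≤ U) :
    (T ^ 2 ≤ 4 * (x * y) ∧ (T ^ 2 = 4 * (x * y) ↔ x = T / 2 ∧ y = T / 2)) ∧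
    (4 * (v * u) ≤ U ^ 2 ∧ (U ^ 2 = 4 * (v * u) ↔ w = 0 ∧ u = v)) := by
  have hw0 : w ≤ 0 := by linarith
  have hTQ : T ≤ Q := by linarith
  have hTP : T ≤ P := by linarith
  have hsum : 0 ≤ (2 * x - T) + (2 * y - T) := by linarith
  have hTU : T * U = T * P + T * Q - T * T := by linear_combination -T * hPQ
  have hFu : T * (2 * u) ≤ T * U := mul_le_mul_of_nonneg_left h2u hT.le
  have hFv : T * (2 * v) ≤ T * U := mul_le_mul_of_nonneg_left h2v hT.le
  have hA : (Q - T) * (2 * x - T) ≤ P * (2 * y - T) := by nlinarith [hFu, huT, hTU]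
  have hB : (P - T) * (2 * y - T) ≤ Q * (2 * x - T) := by nlinarith [hFv, hvT, hTU]
  have hη : 0 ≤ 2 * y - T := by
    by_contra h; push_neg at h
    nlinarith [mul_nonneg (sub_nonneg.2 hTQ) (by linarith : (0:ℝ) ≤ 2 * x - T),
      mul_pos hP (by linarith : (0:ℝ) < T - 2 * y)]
  have hξ : 0 ≤ 2 * x - T := by
    by_contra h; push_neg at h
    nlinarith [mul_nonneg (sub_nonneg.2 hTP) (by linarith : (0:ℝ) ≤ 2 * y - T),
      mul_pos hQ (by linarith : (0:ℝ) < T - 2 * x)]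
  have hmain1 : T ^ 2 ≤ 4 * (x * y) := by
    nlinarith [mul_nonneg hξ hη, mul_nonneg hT.le hsum]
  have hsum2 : u + v ≤ U := by linarith
  have hmain2 : 4 * (v * u) ≤ U ^ 2 := by
    nlinarith [sq_nonneg (u - v), mul_le_mul hsum2 hsum2 (by linarith) (by linarith)]
  refine ⟨⟨hmain1, ?_, ?_⟩, hmain2, ?_, ?_⟩
  · intro h
    have h0 : (2 * x - T) + (2 * y - T) = 0 := by
      nlinarith [mul_nonneg hξ hη, mul_nonneg hT.le hsum]
    constructor <;> linarith
  · rintro ⟨h1, h2⟩; rw [h1, h2]; ring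
  · intro h
    have huvsq : (u - v) ^ 2 ≤ 0 := by
      nlinarith [mul_le_mul hsum2 hsum2 (by linarith) (by linarith)]
    have huv0 : u = v := by nlinarith [sq_nonneg (u - v)]
    have h4 : (U - 2 * u) * (U + 2 * u) = 0 := by linear_combination h - 4 * u * huv0
    have h5 : U = 2 * u := by
      rcases mul_eq_zero.mp h4 with h' | h'
      · linarith
      · exfalso; nlinarith
    exact ⟨by linarith, huv0⟩
  · rintro ⟨h1, h2⟩
    have hU2 : U = u + v := by linarith
    rw [hU2, h2]; ring

set_option maxHeartbeats 1000000 in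
/-- `a b c d` is a convex quadrilateral (counterclockwise), `o` an
interior point, the vertex `d` is non-admissible, and `o` lies in the forbidden
region. -/
theorem stmt_5 (a b c d o : ℝ × ℝ)
    (hc1 : 0 < det2 (b - a) (c - a)) (hc2 : 0 < det2 (c - b) (d - b))
    (hc3 : 0 < det2 (d - c) (a - c)) (hc4 : 0 < det2 (a - d) (b - d))
    (ho1 : 0 < det2 (b - a) (o - a)) (ho2 : 0 < det2 (c - b) (o - b))
    (ho3 : 0 < det2 (d - c) (o - c)) (ho4 : 0 < det2 (a - d) (o - d))
    (hna1 : tri a b d ≤ tri a b c) (hna2 : tri b c d ≤ tri a b c)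
    (hf1 : 2 * tri o a b ≤ tri a b c) (hf2 : 2 * tri o b c ≤ tri a b c)
    (hf3 : 2 * tri o d a ≤ tri a b d) (hf4 : 2 * tri o c d ≤ tri b c d) :
    (tri c d a ^ 2 ≤ 4 * (tri o d a * tri o c d) ∧
      (tri c d a ^ 2 = 4 * (tri o d a * tri o c d) ↔ o = (1 / 2 : ℝ) • (a + c))) ∧
    (4 * (tri o b c * tri o a b) ≤ tri a b c ^ 2 ∧
      (tri a b c ^ 2 = 4 * (tri o b c * tri o a b) ↔ o = (1 / 2 : ℝ) • (a + c))) := by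
  obtain ⟨a1,a2⟩ := a; obtain ⟨b1,b2⟩ := b; obtain ⟨c1,c2⟩ := c
  obtain ⟨d1,d2⟩ := d; obtain ⟨o1,o2⟩ := o
  simp only [tri, det2, Prod.mk_sub_mk, Prod.mk_add_mk, Prod.smul_mk, smul_eq_mul,
    Prod.mk.injEq] at *
  have pU : 0 < (b1 - a1) * (c2 - a2) - (b2 - a2) * (c1 - a1) := hc1
  have pT : 0 < (d1 - c1) * (a2 - c2) - (d2 - c2) * (a1 - c1) := hc3
  have pP : 0 < (b1 - a1) * (d2 - a2) - (b2 - a2) * (d1 - a1) := hc4.trans_eq (by ring)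
  have pQ : 0 < (c1 - b1) * (d2 - b2) - (c2 - b2) * (d1 - b1) := hc2
  have pu : 0 < (a1 - o1) * (b2 - o2) - (a2 - o2) * (b1 - o1) := ho1.trans_eq (by ring)
  have pv : 0 < (b1 - o1) * (c2 - o2) - (b2 - o2) * (c1 - o1) := ho2.trans_eq (by ring)
  have py : 0 < (c1 - o1) * (d2 - o2) - (c2 - o2) * (d1 - o1) := ho3.trans_eq (by ring)
  have px : 0 < (d1 - o1) * (a2 - o2) - (d2 - o2) * (a1 - o1) := ho4.trans_eq (by ring)
  rw [abs_of_pos pP, abs_of_pos pU] at hna1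
  rw [abs_of_pos pQ, abs_of_pos pU] at hna2
  rw [abs_of_pos pu, abs_of_pos pU] at hf1
  rw [abs_of_pos pv, abs_of_pos pU] at hf2
  rw [abs_of_pos px, abs_of_pos pP] at hf3
  rw [abs_of_pos py, abs_of_pos pQ] at hf4
  rw [abs_of_pos pT, abs_of_pos px, abs_of_pos py, abs_of_pos pU, abs_of_pos pv,
    abs_of_pos pu]
  obtain ⟨⟨K1, K2⟩, K3, K4⟩ :=
    key (((d1 - o1) * (a2 - o2) - (d2 - o2) * (a1 - o1)) / 2)
      (((c1 - o1) * (d2 - o2) - (c2 - o2) * (d1 - o1)) / 2)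
      (((a1 - o1) * (b2 - o2) - (a2 - o2) * (b1 - o1)) / 2)
      (((b1 - o1) * (c2 - o2) - (b2 - o2) * (c1 - o1)) / 2)
      (((c1 - a1) * (o2 - a2) - (c2 - a2) * (o1 - a1)) / 2)
      (((d1 - c1) * (a2 - c2) - (d2 - c2) * (a1 - c1)) / 2)
      (((b1 - a1) * (c2 - a2) - (b2 - a2) * (c1 - a1)) / 2)
      (((b1 - a1) * (d2 - a2) - (b2 - a2) * (d1 - a1)) / 2)
      (((c1 - b1) * (d2 - b2) - (c2 - b2) * (d1 - b1)) / 2)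
      (by linarith) (by linarith) (by linarith) (by linarith) (by linarith) (by linarith)
      (by ring) (by ring) (by ring) (by ring) (by ring)
      (by linarith) (by linarith) (by linarith) (by linarith)
  have M1 : (((d1 - o1) * (a2 - o2) - (d2 - o2) * (a1 - o1)) / 2 =
        ((d1 - c1) * (a2 - c2) - (d2 - c2) * (a1 - c1)) / 2 / 2 ∧
      ((c1 - o1) * (d2 - o2) - (c2 - o2) * (d1 - o1)) / 2 =
        ((d1 - c1) * (a2 - c2) - (d2 - c2) * (a1 - c1)) / 2 / 2) ↔
      (o1 = 1 / 2 * (a1 + c1) ∧ o2 = 1 / 2 * (a2 + c2)) := by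
    constructor
    · rintro ⟨h1, h2⟩
      have z1 : ((d1 - c1) * (a2 - c2) - (d2 - c2) * (a1 - c1)) * (2 * o1 - (a1 + c1)) = 0 := by
        linear_combination (-4 * (d1 - c1)) * h1 + (4 * (a1 - d1)) * h2
      have z2 : ((d1 - c1) * (a2 - c2) - (d2 - c2) * (a1 - c1)) * (2 * o2 - (a2 + c2)) = 0 := by
        linear_combination (-4 * (d2 - c2)) * h1 + (4 * (a2 - d2)) * h2
      have w1 := (mul_eq_zero.mp z1).resolve_left (ne_of_gt pT)
      have w2 := (mul_eq_zero.mp z2).resolve_left (ne_of_gt pT)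
      constructor <;> linarith
    · rintro ⟨r1, r2⟩; subst r1; subst r2; constructor <;> ring
  have M2 : (((c1 - a1) * (o2 - a2) - (c2 - a2) * (o1 - a1)) / 2 = 0 ∧
      ((a1 - o1) * (b2 - o2) - (a2 - o2) * (b1 - o1)) / 2 =
        ((b1 - o1) * (c2 - o2) - (b2 - o2) * (c1 - o1)) / 2) ↔
      (o1 = 1 / 2 * (a1 + c1) ∧ o2 = 1 / 2 * (a2 + c2)) := by
    constructor
    · rintro ⟨h1, h2⟩
      have z1 : ((b1 - a1) * (c2 - a2) - (b2 - a2) * (c1 - a1)) * (2 * o1 - (a1 + c1)) = 0 := by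
        linear_combination (-2 * (2 * b1 - a1 - c1)) * h1 + (2 * (c1 - a1)) * h2
      have z2 : ((b1 - a1) * (c2 - a2) - (b2 - a2) * (c1 - a1)) * (2 * o2 - (a2 + c2)) = 0 := by
        linear_combination (-2 * (2 * b2 - a2 - c2)) * h1 + (2 * (c2 - a2)) * h2
      have w1 := (mul_eq_zero.mp z1).resolve_left (ne_of_gt pU)
      have w2 := (mul_eq_zero.mp z2).resolve_left (ne_of_gt pU)
      constructor <;> linarith
    · rintro ⟨r1, r2⟩; subst r1; subst r2; constructor <;> ring
  exact ⟨⟨K1, K2.trans M1⟩, K3, K4.trans M2⟩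
end

section
/- Under the standing assumptions on the convex quadrilateral a, b, c, d and the interior point o, one has Δ(c,d,a)²·Δ(a,b,c)² ≤ 16·Δ(o,d,a)·Δ(o,c,d)·Δ(o,a,b)·Δ(o,b,c). -/
/-- Scalar core of the argument. -/
lemma stmt6_scalar (T U P Q x1 x2 x3 x4 : ℝ)
    (hT : 0 < T) (hU : 0 < U)
    (hx1 : 0 < x1) (hx2 : 0 < x2) (hx3 : 0 < x3) (hx4 : 0 < x4)
    (hPT : P ≤ T) (hQT : Q ≤ T)
    (h1 : 2 * x1 ≤ T) (h2 : 2 * x2 ≤ T) (h3 : 2 * x3 ≤ Q) (h4 : 2 * x4 ≤ P)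
    (hsum : P + Q = T + U)
    (hR1 : Q * x1 + (Q - U) * x2 + T * x3 = T * Q)
    (hR2 : P * x2 + (P - U) * x1 + T * x4 = T * P) :
    U ^ 2 * T ^ 2 ≤ 16 * (x1 * x2 * x3 * x4) := by
  have hQU : U ≤ Q := by linarith
  have hPU : U ≤ P := by linarith
  -- first: Q*x1 ≥ U*T/2
  have hq1 : U * T ≤ 2 * (Q * x1) := by
    nlinarith [mul_nonneg (sub_nonneg.mpr hQU) (by linarith : (0:ℝ) ≤ T - 2 * x2),
      mul_le_mul_of_nonneg_left h3 hT.le]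
  have hp1 : U * T ≤ 2 * (P * x2) := by
    nlinarith [mul_nonneg (sub_nonneg.mpr hPU) (by linarith : (0:ℝ) ≤ T - 2 * x1),
      mul_le_mul_of_nonneg_left h4 hT.le]
  -- key: 4*x1*x3 ≥ U*T
  have k1 : U * T ≤ 4 * (x1 * x3) := by
    have hTk : T * (U * T) ≤ T * (4 * (x1 * x3)) := by
      nlinarith [mul_nonneg (by linarith : (0:ℝ) ≤ T - 2 * x1) (by linarith : (0:ℝ) ≤ 2 * (Q * x1) - U * T),
        mul_nonneg (mul_nonneg hx1.le (sub_nonneg.mpr hQU)) (by linarith : (0:ℝ) ≤ T - 2 * x2)]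
    exact le_of_mul_le_mul_left hTk hT
  have k2 : U * T ≤ 4 * (x2 * x4) := by
    have hTk : T * (U * T) ≤ T * (4 * (x2 * x4)) := by
      nlinarith [mul_nonneg (by linarith : (0:ℝ) ≤ T - 2 * x2) (by linarith : (0:ℝ) ≤ 2 * (P * x2) - U * T),
        mul_nonneg (mul_nonneg hx2.le (sub_nonneg.mpr hPU)) (by linarith : (0:ℝ) ≤ T - 2 * x1)]
    exact le_of_mul_le_mul_left hTk hT
  have hUT : 0 ≤ U * T := by positivity
  have := mul_le_mul k1 k2 hUT (by positivity)
  nlinarith [this]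

/-- `a b c d` is a convex quadrilateral (counterclockwise), `o` an
interior point, the vertex `d` is non-admissible, and `o` lies in the forbidden
region. -/
theorem stmt_6 (a b c d o : ℝ × ℝ)
    (hc1 : 0 < det2 (b - a) (c - a)) (hc2 : 0 < det2 (c - b) (d - b))
    (hc3 : 0 < det2 (d - c) (a - c)) (hc4 : 0 < det2 (a - d) (b - d))
    (ho1 : 0 < det2 (b - a) (o - a)) (ho2 : 0 < det2 (c - b) (o - b))
    (ho3 : 0 < det2 (d - c) (o - c)) (ho4 : 0 < det2 (a - d) (o - d))
    (hna1 : tri a b d ≤ tri a b c) (hna2 : tri b c d ≤ tri a b c)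
    (hf1 : 2 * tri o a b ≤ tri a b c) (hf2 : 2 * tri o b c ≤ tri a b c)
    (hf3 : 2 * tri o d a ≤ tri a b d) (hf4 : 2 * tri o c d ≤ tri b c d) :
    tri c d a ^ 2 * tri a b c ^ 2 ≤ 16 * (tri o d a * tri o c d * tri o a b * tri o b c) := by
  set T := det2 (b - a) (c - a) with hTdef
  set U := det2 (d - c) (a - c) with hUdef
  set Q := det2 (c - b) (d - b) with hQdef
  set x1 := det2 (b - a) (o - a) with hx1def
  set x2 := det2 (c - b) (o - b) with hx2def
  set x3 := det2 (d - c) (o - c) with hx3def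
  set x4 := det2 (a - d) (o - d) with hx4def
  have hPpos : 0 < det2 (b - a) (d - a) := by
    have : det2 (b - a) (d - a) = det2 (a - d) (b - d) := by
      simp only [det2, Prod.fst_sub, Prod.snd_sub]; ring
    rw [this]; exact hc4
  set P := det2 (b - a) (d - a) with hPdef
  -- rewrite all the triangles
  have e1 : tri a b c = T / 2 := by
    rw [tri, abs_of_pos hc1]
  have e2 : tri c d a = U / 2 := by
    rw [tri]
    have : det2 (d - c) (a - c) = U := rfl
    rw [abs_of_pos hc3]
  have e3 : tri a b d = P / 2 := by
    rw [tri, abs_of_pos (show (0:ℝ) < det2 (b - a) (d - a) from hPpos)]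
  have e4 : tri b c d = Q / 2 := by
    rw [tri, abs_of_pos hc2]
  have e5 : tri o a b = x1 / 2 := by
    rw [tri]
    have h : det2 (a - o) (b - o) = x1 := by
      simp only [hx1def, det2, Prod.fst_sub, Prod.snd_sub]; ring
    rw [h, abs_of_pos ho1]
  have e6 : tri o b c = x2 / 2 := by
    rw [tri]
    have h : det2 (b - o) (c - o) = x2 := by
      simp only [hx2def, det2, Prod.fst_sub, Prod.snd_sub]; ring
    rw [h, abs_of_pos ho2]
  have e7 : tri o c d = x3 / 2 := by
    rw [tri]
    have h : det2 (c - o) (d - o) = x3 := by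
      simp only [hx3def, det2, Prod.fst_sub, Prod.snd_sub]; ring
    rw [h, abs_of_pos ho3]
  have e8 : tri o d a = x4 / 2 := by
    rw [tri]
    have h : det2 (d - o) (a - o) = x4 := by
      simp only [hx4def, det2, Prod.fst_sub, Prod.snd_sub]; ring
    rw [h, abs_of_pos ho4]
  rw [e1, e2, e5, e6, e7, e8]
  rw [e1, e3] at hna1; rw [e1, e4] at hna2
  rw [e1, e5] at hf1; rw [e1, e6] at hf2
  rw [e3, e8] at hf3; rw [e4, e7] at hf4
  -- the two determinant identities
  have hsum : P + Q = T + U := by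
    simp only [hPdef, hQdef, hTdef, hUdef, det2, Prod.fst_sub, Prod.snd_sub]; ring
  have hR1 : Q * x1 + (Q - U) * x2 + T * x3 = T * Q := by
    simp only [hPdef, hQdef, hTdef, hUdef, hx1def, hx2def, hx3def,
      det2, Prod.fst_sub, Prod.snd_sub]; ring
  have hR2 : P * x2 + (P - U) * x1 + T * x4 = T * P := by
    simp only [hPdef, hQdef, hTdef, hUdef, hx1def, hx2def, hx4def,
      det2, Prod.fst_sub, Prod.snd_sub]; ring
  have hmain := stmt6_scalar T U P Q x1 x2 x3 x4 hc1 hc3 ho1 ho2 ho3 ho4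
    (by linarith) (by linarith) (by linarith) (by linarith) (by linarith) (by linarith)
    hsum hR1 hR2
  nlinarith [hmain]
end

section
/- Under the standing assumptions on the convex quadrilateral a, b, c, d and the interior point o, one has Δ(b,c,d)·(Δ(a,b,c)² − 4·Δ(o,b,c)·Δ(o,a,b)) ≤ 2·Δ(a,b,c)²·Δ(o,c,d). (Equivalently, whenever Δ(a,b,c)² > 4Δ(o,b,c)Δ(o,a,b), the ratio Δ(b,c,d)/Δ(o,c,d) is at most 1/(1/2 − 2Δ(o,b,c)Δ(o,a,b)/Δ(a,b,c)²).) -/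
lemma key_ineq (S P Q x y z T : ℝ) (hS : 0 < S) (hy : 0 < y) (hQ : 0 < Q)
    (hx2 : 2 * x ≤ S) (hy2 : 2 * y ≤ S) (hT : 0 < T)
    (hPQ : P + Q = S + T)
    (hid : S * z = Q * (S - x) + (P - S) * y) :
    Q * (S ^ 2 - 4 * (y * x)) ≤ 2 * S ^ 2 * z := by
  have hP : P - S = T - Q := by linarith
  rw [hP] at hid
  have h2 : 2 * S * (S * z) = 2 * S * (Q * (S - x) + (T - Q) * y) := by rw [hid]
  nlinarith [mul_nonneg (mul_nonneg hQ.le (by linarith : (0:ℝ) ≤ S - 2*x)) (by linarith : (0:ℝ) ≤ S - 2*y),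
    mul_pos (mul_pos hS hy) hT, h2]

/-- `a b c d` is a convex quadrilateral (counterclockwise), `o` an
interior point, the vertex `d` is non-admissible, and `o` lies in the forbidden
region. -/
theorem stmt_7 (a b c d o : ℝ × ℝ)
    (hc1 : 0 < det2 (b - a) (c - a)) (hc2 : 0 < det2 (c - b) (d - b))
    (hc3 : 0 < det2 (d - c) (a - c)) (hc4 : 0 < det2 (a - d) (b - d))
    (ho1 : 0 < det2 (b - a) (o - a)) (ho2 : 0 < det2 (c - b) (o - b))
    (ho3 : 0 < det2 (d - c) (o - c)) (ho4 : 0 < det2 (a - d) (o - d))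
    (hna1 : tri a b d ≤ tri a b c) (hna2 : tri b c d ≤ tri a b c)
    (hf1 : 2 * tri o a b ≤ tri a b c) (hf2 : 2 * tri o b c ≤ tri a b c)
    (hf3 : 2 * tri o d a ≤ tri a b d) (hf4 : 2 * tri o c d ≤ tri b c d) :
    tri b c d * (tri a b c ^ 2 - 4 * (tri o b c * tri o a b)) ≤ 2 * tri a b c ^ 2 * tri o c d := by
  have e1 : tri a b c = det2 (b - a) (c - a) / 2 := by
    rw [tri, abs_of_pos hc1]
  have e2 : tri b c d = det2 (c - b) (d - b) / 2 := by
    rw [tri, abs_of_pos hc2]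
  have eq4 : det2 (b - a) (d - a) = det2 (a - d) (b - d) := by
    simp [det2, Prod.fst_sub, Prod.snd_sub]; ring
  have e3 : tri a b d = det2 (a - d) (b - d) / 2 := by
    rw [tri, eq4, abs_of_pos hc4]
  have eqx : det2 (a - o) (b - o) = det2 (b - a) (o - a) := by
    simp [det2, Prod.fst_sub, Prod.snd_sub]; ring
  have ex : tri o a b = det2 (b - a) (o - a) / 2 := by
    rw [tri, eqx, abs_of_pos ho1]
  have eqy : det2 (b - o) (c - o) = det2 (c - b) (o - b) := by
    simp [det2, Prod.fst_sub, Prod.snd_sub]; ring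
  have ey : tri o b c = det2 (c - b) (o - b) / 2 := by
    rw [tri, eqy, abs_of_pos ho2]
  have eqz : det2 (c - o) (d - o) = det2 (d - c) (o - c) := by
    simp [det2, Prod.fst_sub, Prod.snd_sub]; ring
  have ez : tri o c d = det2 (d - c) (o - c) / 2 := by
    rw [tri, eqz, abs_of_pos ho3]
  rw [e1] at hf1 hf2
  rw [ex] at hf1
  rw [ey] at hf2
  rw [e1, e2, ex, ey, ez]
  set S := det2 (b - a) (c - a) / 2 with hSdef
  set P := det2 (a - d) (b - d) / 2 with hPdef
  set Q := det2 (c - b) (d - b) / 2 with hQdef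
  set x := det2 (b - a) (o - a) / 2 with hxdef
  set y := det2 (c - b) (o - b) / 2 with hydef
  set z := det2 (d - c) (o - c) / 2 with hzdef
  set T := det2 (d - c) (a - c) / 2 with hTdef
  have hPQ : P + Q = S + T := by
    rw [hSdef, hPdef, hQdef, hTdef]
    simp [det2, Prod.fst_sub, Prod.snd_sub]; ring
  have hid : S * z = Q * (S - x) + (P - S) * y := by
    rw [hSdef, hPdef, hQdef, hxdef, hydef, hzdef]
    simp [det2, Prod.fst_sub, Prod.snd_sub]; ring
  exact key_ineq S P Q x y z T (by linarith) (by linarith) (by linarith)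
    (by linarith) (by linarith) (by linarith) hPQ hid
end

section
/- Let x, y, z be positive real numbers satisfying x² + y² + z² = x·y·z. Then x > 2, and moreover y ≥ 2x/√(x² − 4) and z ≥ 2x/√(x² − 4). -/
/-- if `x, y, z > 0` satisfy `x² + y² + z² = xyz`, then `x > 2` and
`y, z ≥ 2x/√(x² − 4)`. -/
theorem stmt_10 (x y z : ℝ) (hx : 0 < x) (hy : 0 < y) (hz : 0 < z)
    (h : x ^ 2 + y ^ 2 + z ^ 2 = x * y * z) :
    2 < x ∧ 2 * x / Real.sqrt (x ^ 2 - 4) ≤ y ∧ 2 * x / Real.sqrt (x ^ 2 - 4) ≤ z := by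
  have hx2 : 2 < x := by
    by_contra hle
    push_neg at hle
    nlinarith [sq_nonneg (y - z), mul_pos hy hz, sq_nonneg x]
  refine ⟨hx2, ?_, ?_⟩ <;>
  · set s := Real.sqrt (x ^ 2 - 4) with hs
    have hs4 : 0 < x ^ 2 - 4 := by nlinarith
    have hspos : 0 < s := Real.sqrt_pos.mpr hs4
    have hs2 : s ^ 2 = x ^ 2 - 4 := Real.sq_sqrt hs4.le
    rw [div_le_iff₀ hspos]
    first
      | nlinarith [sq_nonneg (2 * z - x * y), mul_pos hy hspos, sq_nonneg (y * s - 2 * x)]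
      | nlinarith [sq_nonneg (2 * y - x * z), mul_pos hz hspos, sq_nonneg (z * s - 2 * x)]
end

section
/- Let r_E and r_G be positive real numbers, let a, b, c, α be integers with a ≥ 1, b ≥ 1, c ≥ 1, α ≥ 1, and set r_F = (a·r_G + b·r_E)/(α·a·b + c). Then r_F ≤ max(r_E, r_G), and equality holds if and only if all of the following hold: r_E = r_G, α = 1, c = 1, and (a = 1 or b = 1). -/
/-- for positive reals `r_E, r_G`, integers `a, b, c, α ≥ 1` and
`r_F = (a·r_G + b·r_E)/(α·a·b + c)`, one has `r_F ≤ max(r_E, r_G)`, with equality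
iff `r_E = r_G`, `α = 1`, `c = 1` and (`a = 1` or `b = 1`). -/
theorem stmt_12 (rE rG : ℝ) (hrE : 0 < rE) (hrG : 0 < rG)
    (a b c α : ℤ) (ha : 1 ≤ a) (hb : 1 ≤ b) (hc : 1 ≤ c) (hα : 1 ≤ α)
    (rF : ℝ) (hrF : rF = ((a : ℝ) * rG + (b : ℝ) * rE) / ((α : ℝ) * a * b + c)) :
    rF ≤ max rE rG ∧
    (rF = max rE rG ↔ rE = rG ∧ α = 1 ∧ c = 1 ∧ (a = 1 ∨ b = 1)) := by
  have hA : (1:ℝ) ≤ (a:ℝ) := by exact_mod_cast ha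
  have hB : (1:ℝ) ≤ (b:ℝ) := by exact_mod_cast hb
  have hC : (1:ℝ) ≤ (c:ℝ) := by exact_mod_cast hc
  have hAl : (1:ℝ) ≤ (α:ℝ) := by exact_mod_cast hα
  set M : ℝ := max rE rG with hM
  have hMpos : 0 < M := lt_of_lt_of_le hrE (le_max_left _ _)
  have h1 : rE ≤ M := le_max_left _ _
  have h2 : rG ≤ M := le_max_right _ _
  have hAB : (1:ℝ) ≤ (a:ℝ) * b := by nlinarith
  have hD : 0 < (α : ℝ) * a * b + c := by nlinarith
  -- key: (α-1)ab + (a-1)(b-1) + (c-1) ≥ 0, so a + b ≤ αab + c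
  have hab : (a:ℝ) + b ≤ (α : ℝ) * a * b + c := by
    nlinarith [mul_nonneg (mul_nonneg (by linarith : (0:ℝ) ≤ (α:ℝ) - 1) (by linarith : (0:ℝ) ≤ (a:ℝ))) (by linarith : (0:ℝ) ≤ (b:ℝ)),
      mul_nonneg (by linarith : (0:ℝ) ≤ (a:ℝ) - 1) (by linarith : (0:ℝ) ≤ (b:ℝ) - 1)]
  have hnum : (a : ℝ) * rG + (b : ℝ) * rE ≤ ((α : ℝ) * a * b + c) * M := by
    have e1 : (a:ℝ) * rG ≤ (a:ℝ) * M := by nlinarith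
    have e2 : (b:ℝ) * rE ≤ (b:ℝ) * M := by nlinarith
    nlinarith [mul_le_mul_of_nonneg_right hab (le_of_lt hMpos)]
  have hle : rF ≤ M := by
    rw [hrF, div_le_iff₀ hD]; linarith
  refine ⟨hle, ?_, ?_⟩
  · intro heq
    have hnumeq : (a : ℝ) * rG + (b : ℝ) * rE = ((α : ℝ) * a * b + c) * M := by
      have := heq
      rw [hrF, div_eq_iff (ne_of_gt hD)] at this
      linarith [this]
    -- each slack term must vanish
    have s1 : (a:ℝ) * (M - rG) ≥ 0 := by nlinarith
    have s2 : (b:ℝ) * (M - rE) ≥ 0 := by nlinarith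
    have s3 : ((α : ℝ) * a * b + c - a - b) * M ≥ 0 := by nlinarith
    have hsum : (a:ℝ) * (M - rG) + (b:ℝ) * (M - rE)
        + ((α : ℝ) * a * b + c - a - b) * M = 0 := by ring_nf; nlinarith [hnumeq]
    have z1 : (a:ℝ) * (M - rG) = 0 := by linarith
    have z2 : (b:ℝ) * (M - rE) = 0 := by linarith
    have z3 : ((α : ℝ) * a * b + c - a - b) * M = 0 := by linarith
    have hMG : rG = M := by
      rcases mul_eq_zero.mp z1 with h | h
      · linarith
      · linarith
    have hME : rE = M := by
      rcases mul_eq_zero.mp z2 with h | h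
      · linarith
      · linarith
    have hEG : rE = rG := by rw [hMG, hME]
    have hDeq : (α : ℝ) * a * b + c = (a:ℝ) + b := by
      rcases mul_eq_zero.mp z3 with h | h
      · linarith
      · linarith
    have hZeq : α * a * b + c = a + b := by exact_mod_cast hDeq
    -- (α-1)ab + (a-1)(b-1) + (c-1) = 0 over ℤ, all terms nonneg
    have t1 : (0:ℤ) ≤ (α - 1) * a * b :=
      mul_nonneg (mul_nonneg (by linarith) (by linarith)) (by linarith)
    have t2 : (0:ℤ) ≤ (a - 1) * (b - 1) :=
      mul_nonneg (by linarith) (by linarith)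
    have t3 : (0:ℤ) ≤ c - 1 := by linarith
    have hsumZ : (α - 1) * a * b + (a - 1) * (b - 1) + (c - 1) = 0 := by
      linear_combination hZeq
    have e0 : (α - 1) * a * b = 0 := by linarith
    have e1 : (α - 1) * (a * b) = 0 := by linear_combination e0
    have hab' : (1:ℤ) ≤ a * b := one_le_mul_of_one_le_of_one_le ha hb
    have hα1 : α = 1 := by
      rcases mul_eq_zero.mp e1 with h | h
      · linarith
      · linarith
    have hc1 : c = 1 := by linarith
    have hab1 : (a - 1) * (b - 1) = 0 := by linarith
    rcases mul_eq_zero.mp hab1 with h | h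
    · exact ⟨hEG, hα1, hc1, Or.inl (by linarith)⟩
    · exact ⟨hEG, hα1, hc1, Or.inr (by linarith)⟩
  · rintro ⟨hEG, hα1, hc1, hab1⟩
    have hDeq : (α : ℝ) * a * b + c = (a:ℝ) + b := by
      subst hα1 hc1
      rcases hab1 with h | h <;> subst h <;> push_cast <;> ring
    have hMeq : M = rE := by rw [hM, hEG, max_self]
    rw [hrF, hDeq, hMeq, hEG]
    rw [div_eq_iff (by linarith : (a:ℝ) + b ≠ 0)]
    ring
end

section
/- Let B be the symmetric bilinear form on ℤ³ given by B((a,b,c), (a′,b′,c′)) = a·a′ − b·b′ − c·c′, and let K = (−3, 1, 1). If f : ℤ³ → ℤ³ is a ℤ-linear automorphism with B(f(x), f(y)) = B(x, y) for all x, y ∈ ℤ³ and f(K) = K, then f is either the identity or the map (a, b, c) ↦ (a, c, b). In particular, the subgroup of the orthogonal group of B stabilizing K has exactly two elements. -/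
def bform3 (x y : ℤ × ℤ × ℤ) : ℤ := x.1 * y.1 - x.2.1 * y.2.1 - x.2.2 * y.2.2

/-- The swap `(a,b,c) ↦ (a,c,b)` as a linear equivalence. -/
def swapLE : (ℤ × ℤ × ℤ) ≃ₗ[ℤ] (ℤ × ℤ × ℤ) where
  toFun x := (x.1, x.2.2, x.2.1)
  invFun x := (x.1, x.2.2, x.2.1)
  map_add' x y := rfl
  map_smul' m x := rfl
  left_inv x := rfl
  right_inv x := rfl

lemma key_s16 (f : (ℤ × ℤ × ℤ) ≃ₗ[ℤ] (ℤ × ℤ × ℤ))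
    (hB : ∀ x y : ℤ × ℤ × ℤ, bform3 (f x) (f y) = bform3 x y)
    (hK : f (-3, 1, 1) = (-3, 1, 1)) :
    (∀ x : ℤ × ℤ × ℤ, f x = x) ∨ (∀ x : ℤ × ℤ × ℤ, f x = (x.1, x.2.2, x.2.1)) := by
  rcases hf1 : f (1, 0, 0) with ⟨a, b, c⟩
  rcases hf2 : f (0, 1, 0) with ⟨d, e, g⟩
  rcases hf3 : f (0, 0, 1) with ⟨p, q, r⟩
  have h1 := hB (1,0,0) (1,0,0)
  have h2 := hB (0,1,0) (0,1,0)
  have h3 := hB (0,0,1) (0,0,1)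
  have h12 := hB (1,0,0) (0,1,0)
  have h13 := hB (1,0,0) (0,0,1)
  have h23 := hB (0,1,0) (0,0,1)
  have hk1 : bform3 (f (1,0,0)) (-3,1,1) = -3 := by
    conv_lhs => rw [← hK]
    rw [hB]; rfl
  have hk2 : bform3 (f (0,1,0)) (-3,1,1) = -1 := by
    conv_lhs => rw [← hK]
    rw [hB]; rfl
  have hk3 : bform3 (f (0,0,1)) (-3,1,1) = -1 := by
    conv_lhs => rw [← hK]
    rw [hB]; rfl
  rw [hf1] at h1 h12 h13 hk1
  rw [hf2] at h2 h12 h23 hk2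
  rw [hf3] at h3 h13 h23 hk3
  simp only [bform3] at h1 h2 h3 h12 h13 h23 hk1 hk2 hk3
  -- h1 : a*a - b*b - c*c = 1, hk1 : a*(-3) - b*1 - c*1 = -3, etc.
  have ha : a = 1 := by nlinarith [sq_nonneg (b - c), sq_nonneg (b + c), sq_nonneg (a - 1), sq_nonneg (7*a - 11)]
  subst ha
  have hb : b = 0 := by nlinarith [sq_nonneg b, sq_nonneg c]
  have hc : c = 0 := by nlinarith [sq_nonneg b, sq_nonneg c]
  subst hb; subst hc
  have hd : d = 0 := by linarith
  have hp : p = 0 := by linarith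
  subst hd; subst hp
  have heg : e * g = 0 := by nlinarith
  have hqr : q * r = 0 := by nlinarith
  -- decompose arbitrary x
  have hdecomp : ∀ x : ℤ × ℤ × ℤ,
      f x = x.1 • f (1,0,0) + x.2.1 • f (0,1,0) + x.2.2 • f (0,0,1) := by
    intro x
    rw [← map_smul, ← map_smul, ← map_smul, ← map_add, ← map_add]
    congr 1
    obtain ⟨x1, x2, x3⟩ := x
    simp [Prod.ext_iff, smul_eq_mul]
  rcases mul_eq_zero.mp heg with he | hg
  · have hg1 : g = 1 := by linarith
    subst he; subst hg1
    have hr : r = 0 := by linarith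
    have hq : q = 1 := by linarith
    subst hq; subst hr
    right
    intro x
    rw [hdecomp x, hf1, hf2, hf3]
    obtain ⟨x1, x2, x3⟩ := x
    simp [Prod.ext_iff, smul_eq_mul]
  · have he1 : e = 1 := by linarith
    subst hg; subst he1
    have hq : q = 0 := by linarith
    have hr : r = 1 := by linarith
    subst hq; subst hr
    left
    intro x
    rw [hdecomp x, hf1, hf2, hf3]
    obtain ⟨x1, x2, x3⟩ := x
    simp [Prod.ext_iff, smul_eq_mul]

/-- a `ℤ`-linear automorphism of `ℤ³` preserving the form
`aa′ − bb′ − cc′` and fixing `K = (−3, 1, 1)` is the identity or the swap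
`(a, b, c) ↦ (a, c, b)`; in particular the stabilizer of `K` in the orthogonal
group of the form has exactly two elements. -/
theorem stmt_16 (f : (ℤ × ℤ × ℤ) ≃ₗ[ℤ] (ℤ × ℤ × ℤ))
    (hB : ∀ x y : ℤ × ℤ × ℤ, bform3 (f x) (f y) = bform3 x y)
    (hK : f (-3, 1, 1) = (-3, 1, 1)) :
    ((∀ x : ℤ × ℤ × ℤ, f x = x) ∨ (∀ x : ℤ × ℤ × ℤ, f x = (x.1, x.2.2, x.2.1))) ∧
    Nat.card {g : (ℤ × ℤ × ℤ) ≃ₗ[ℤ] (ℤ × ℤ × ℤ) //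
      (∀ x y : ℤ × ℤ × ℤ, bform3 (g x) (g y) = bform3 x y) ∧
        g (-3, 1, 1) = (-3, 1, 1)} = 2 := by
  constructor
  · exact key_s16 f hB hK
  · rw [Nat.card_eq_two_iff]
    refine ⟨⟨LinearEquiv.refl ℤ _, fun x y => rfl, rfl⟩,
      ⟨swapLE, fun x y => by simp [bform3, swapLE]; ring, rfl⟩, ?_, ?_⟩
    · intro h
      have := congrArg (fun gg => gg.1 ((0:ℤ), (1:ℤ), (0:ℤ))) h
      simp [swapLE, Prod.ext_iff] at this
    · ext gg
      simp only [Set.mem_insert_iff, Set.mem_singleton_iff, Set.mem_univ, iff_true]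
      rcases key_s16 gg.1 gg.2.1 gg.2.2 with h | h
      · left
        exact Subtype.ext (LinearEquiv.ext h)
      · right
        refine Subtype.ext (LinearEquiv.ext fun x => ?_)
        rw [h x]; rfl
end
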